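/- Let m < n be nonnegative integers, 0 = γ₀ < γ₁ < ⋯ < γ_n ≤ 1, k_j > 0 for 0 ≤ j ≤ m and k_j < 0 for m < j ≤ n, and S(s) = Σ_{j=0}^n k_j s^{γ_j}. Then for every t ∈ (0,∞), if S(t) ≤ 0 then S′(t) < 0. -/

import Mathlib

open Finset

theorem sum_of_powers_nonpos_implies_deriv_neg
    (m n : ℕ) (hmn : m < n)
    (γ k : ℕ → ℝ)
    (hγ0 : γ 0 = 0)
    (hγmono : ∀ j, j < n → γ j < γ (j + 1))
    (hγn : γ n ≤ 1)
    (hkpos : ∀ j, j ≤ m → 0 < k j)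
    (hkneg : ∀ j, m < j → j ≤ n → k j < 0)
    (S : ℝ → ℝ)
    (hS : ∀ s : ℝ, S s = ∑ j ∈ Finset.range (n + 1), k j * s ^ (γ j))
    (t S' : ℝ) (ht : 0 < t)
    (hderiv : HasDerivAt S S' t)
    (hSt : S t ≤ 0) :
    S' < 0 := by
  -- monotonicity of γ on [0, n]
  have hmono : ∀ i j : ℕ, i ≤ j → j ≤ n → γ i ≤ γ j := by
    intro i j hij hjn
    induction j with
    | zero => simp_all
    | succ j ih =>
      rcases Nat.eq_or_lt_of_le hij with h | h
      · simp [h]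
      · exact le_trans (ih (Nat.lt_succ_iff.mp h) (le_trans (Nat.le_succ j) hjn))
          (le_of_lt (hγmono j (Nat.lt_of_succ_le hjn)))
  have hm1n : m + 1 ≤ n := hmn
  set c := γ (m + 1) with hc
  have hcpos : 0 < c := by
    have h1 : γ 0 < γ 1 := hγmono 0 (lt_of_le_of_lt (Nat.zero_le m) hmn)
    have h2 : γ 1 ≤ c := hmono 1 (m + 1) (Nat.succ_le_succ (Nat.zero_le m)) hm1n
    linarith [hγ0 ▸ h1]
  -- the derivative
  set D : ℝ := ∑ j ∈ Finset.range (n + 1), k j * (γ j * t ^ (γ j - 1)) with hD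
  have hderiv2 : HasDerivAt S D t := by
    have : HasDerivAt (fun s : ℝ => ∑ j ∈ Finset.range (n + 1), k j * s ^ (γ j)) D t := by
      apply HasDerivAt.fun_sum
      intro j hj
      exact (Real.hasDerivAt_rpow_const (Or.inl ht.ne')).const_mul (k j)
    exact this.congr_of_eventuallyEq (Filter.Eventually.of_forall fun s => (hS s))
  have hSD : S' = D := hderiv.unique hderiv2
  rw [hSD]
  -- termwise comparison
  have key : D < ∑ j ∈ Finset.range (n + 1), (c / t) * (k j * t ^ (γ j)) := by
    rw [hD]
    apply Finset.sum_lt_sum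
    · intro j hj
      rw [Finset.mem_range, Nat.lt_succ_iff] at hj
      have htp : (0:ℝ) < t ^ (γ j - 1) := Real.rpow_pos_of_pos ht _
      have hrw : (c / t) * (k j * t ^ (γ j)) = k j * (c * t ^ (γ j - 1)) := by
        rw [Real.rpow_sub ht, Real.rpow_one]
        field_simp
      rw [hrw]
      have hkc : k j * γ j ≤ k j * c := by
        rcases le_or_gt j m with h | h
        · exact mul_le_mul_of_nonneg_left
            (hmono j (m+1) (Nat.le_succ_of_le h) hm1n) (hkpos j h).le
        · exact mul_le_mul_of_nonpos_left (hmono (m+1) j h hj) (hkneg j h hj).le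
      calc k j * (γ j * t ^ (γ j - 1)) = (k j * γ j) * t ^ (γ j - 1) := by ring
        _ ≤ (k j * c) * t ^ (γ j - 1) := mul_le_mul_of_nonneg_right hkc htp.le
        _ = k j * (c * t ^ (γ j - 1)) := by ring
    · refine ⟨0, Finset.mem_range.mpr (Nat.succ_pos n), ?_⟩
      have htp : (0:ℝ) < t ^ (γ 0 - 1) := Real.rpow_pos_of_pos ht _
      have hrw : (c / t) * (k 0 * t ^ (γ 0)) = k 0 * (c * t ^ (γ 0 - 1)) := by
        rw [Real.rpow_sub ht, Real.rpow_one]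
        field_simp
      rw [hrw, hγ0]
      simp only [zero_mul, mul_zero, zero_sub]
      have htp' : (0:ℝ) < t ^ (-1:ℝ) := Real.rpow_pos_of_pos ht _
      exact mul_pos (hkpos 0 (Nat.zero_le m)) (mul_pos hcpos htp')
  have : ∑ j ∈ Finset.range (n + 1), (c / t) * (k j * t ^ (γ j)) = (c / t) * S t := by
    rw [hS, Finset.mul_sum]
  rw [this] at key
  have : (c / t) * S t ≤ 0 := mul_nonpos_of_nonneg_of_nonpos (div_pos hcpos ht).le hSt
  linarith
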